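/- Let t, s, k, n be integers with t ≥ 0, s ≥ 0, k ≥ s+1 and n ≥ 2k+t. Let ℱ ⊆ C([n], k+t) and 𝒢 ⊆ C([n], k) be cross-intersecting families such that ℱ is (t+1)-intersecting and C([k+t+s], k+t) ⊆ ℱ. Then every F ∈ ℱ satisfies |F ∩ [k+t+s]| ≥ t+s+1 and every G ∈ 𝒢 satisfies |G ∩ [k+t+s]| ≥ s+1. -/

import Mathlib

open Finset

theorem intersection_with_initial_segment
    (t s k n : ℕ) (hk : s + 1 ≤ k) (hn : 2 * k + t ≤ n)
    (F G : Finset (Finset ℕ))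
    (hF : F ⊆ powersetCard (k + t) (Icc 1 n))
    (hG : G ⊆ powersetCard k (Icc 1 n))
    (hcross : ∀ A ∈ F, ∀ B ∈ G, (A ∩ B).Nonempty)
    (hint : ∀ A ∈ F, ∀ A' ∈ F, t + 1 ≤ (A ∩ A').card)
    (hsub : powersetCard (k + t) (Icc 1 (k + t + s)) ⊆ F) :
    (∀ A ∈ F, t + s + 1 ≤ (A ∩ Icc 1 (k + t + s)).card) ∧
      (∀ B ∈ G, s + 1 ≤ (B ∩ Icc 1 (k + t + s)).card) := by
  set m := k + t + s with hm
  have hIcard : (Icc 1 m).card = m := by simp [Nat.card_Icc]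
  constructor
  · intro A hA
    by_contra hlt
    push_neg at hlt
    have hc : (A ∩ Icc 1 m).card ≤ t + s := by omega
    set D := Icc 1 m \ A with hD
    have hDA : D ∩ A = ∅ := by
      ext x; simp [hD, Finset.mem_sdiff]
    have hDcard : D.card + (A ∩ Icc 1 m).card = m := by
      have := Finset.card_sdiff_add_card_inter (Icc 1 m) A
      rw [Finset.inter_comm] at this
      rw [hD]
      omega
    have hDk : k ≤ D.card := by omega
    rcases le_or_gt D.card (k + t) with hle | hgt
    · obtain ⟨A', hDA', hA'I, hA'card⟩ :=
        Finset.exists_subsuperset_card_eq (Finset.sdiff_subset : D ⊆ Icc 1 m) hle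
          (by omega : k + t ≤ (Icc 1 m).card)
      have hA'F : A' ∈ F := hsub (by
        rw [Finset.mem_powersetCard]; exact ⟨hA'I, hA'card⟩)
      have hbound : (A ∩ A').card ≤ t := by
        have h1 : A ∩ A' ⊆ A' \ D := by
          intro x hx
          simp only [Finset.mem_inter] at hx
          rw [Finset.mem_sdiff]
          refine ⟨hx.2, fun hxD => ?_⟩
          have : x ∈ D ∩ A := Finset.mem_inter.2 ⟨hxD, hx.1⟩
          rw [hDA] at this; exact absurd this (Finset.notMem_empty x)
        have h2 : (A' \ D).card = k + t - D.card := by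
          rw [Finset.card_sdiff_of_subset hDA', hA'card]
        have := Finset.card_le_card h1
        omega
      have := hint A hA A' hA'F
      omega
    · obtain ⟨A', hA'D, hA'card⟩ := Finset.exists_subset_card_eq (s := D) (n := k + t) (le_of_lt hgt)
      have hA'F : A' ∈ F := hsub (by
        rw [Finset.mem_powersetCard]
        exact ⟨hA'D.trans Finset.sdiff_subset, hA'card⟩)
      have hbound : A ∩ A' = ∅ := by
        ext x; simp only [Finset.mem_inter, Finset.notMem_empty, iff_false]
        rintro ⟨hxA, hxA'⟩
        have : x ∈ D ∩ A := Finset.mem_inter.2 ⟨hA'D hxA', hxA⟩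
        rw [hDA] at this; exact absurd this (Finset.notMem_empty x)
      have := hint A hA A' hA'F
      rw [hbound] at this
      simp at this
  · intro B hB
    by_contra hlt
    push_neg at hlt
    have hc : (B ∩ Icc 1 m).card ≤ s := by omega
    set D := Icc 1 m \ B with hD
    have hDcard : D.card + (B ∩ Icc 1 m).card = m := by
      have := Finset.card_sdiff_add_card_inter (Icc 1 m) B
      rw [Finset.inter_comm] at this
      rw [hD]
      omega
    obtain ⟨A, hAD, hAcard⟩ := Finset.exists_subset_card_eq (s := D) (n := k + t) (by omega)
    have hAF : A ∈ F := hsub (by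
      rw [Finset.mem_powersetCard]
      exact ⟨hAD.trans Finset.sdiff_subset, hAcard⟩)
    obtain ⟨x, hx⟩ := hcross A hAF B hB
    rw [Finset.mem_inter] at hx
    have := hAD hx.1
    rw [hD, Finset.mem_sdiff] at this
    exact this.2 hx.2
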